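/- Suppose s − t is even (so n = s + t is even), let γ_1, …, γ_n be a family of gamma matrices for signature (s,t), and let j_+ and j_− be bijective conjugate-linear maps on ℂ^N satisfying j_+(γ_k ψ) = γ_k j_+(ψ) and j_−(γ_k ψ) = −γ_k j_−(ψ) for every index k and all ψ. Then there exists a nonzero constant ζ ∈ ℂ with j_− = ζ · Γ ∘ j_+, where Γ is the chirality operator; if moreover j_+ and j_− are anti-unitary for the standard Hermitian product on ℂ^N, then |ζ| = 1. -/

import Mathlib

open Matrix

/-- A family of gamma matrices for signature `(s, t)`. -/
def IsGammaFamily (s t : ℕ)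
    (γ : Fin (s + t) → Matrix (Fin (2 ^ ((s + t) / 2))) (Fin (2 ^ ((s + t) / 2))) ℂ) : Prop :=
  (∀ j k : Fin (s + t),
      γ j * γ k + γ k * γ j
        = (if j = k then (if (j : ℕ) < t then (2 : ℂ) else -2) else 0) • (1 : Matrix _ _ ℂ)) ∧
  (∀ k : Fin (s + t), (γ k)ᴴ = if (k : ℕ) < t then γ k else -(γ k))

/-- The chirality operator `Γ := i ^ ⌊(s - t + 1)/2⌋ • γ₁ ⋯ γₙ` (floor division on `ℤ`). -/
noncomputable def chirality (s t : ℕ)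
    (γ : Fin (s + t) → Matrix (Fin (2 ^ ((s + t) / 2))) (Fin (2 ^ ((s + t) / 2))) ℂ) :
    Matrix (Fin (2 ^ ((s + t) / 2))) (Fin (2 ^ ((s + t) / 2))) ℂ :=
  (Complex.I ^ (Int.fdiv ((s : ℤ) - (t : ℤ) + 1) 2)) • (List.ofFn γ).prod


section Aux

variable {m : Type} [Fintype m] [DecidableEq m] {n : ℕ}
variable (γ : Fin n → Matrix m m ℂ)

/-- Swapping a single gamma past a list product. -/
lemma gamma_swap_list
    (hanti : ∀ j l : Fin n, j ≠ l → γ j * γ l = -(γ l * γ j)) (k : Fin n) :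
    ∀ L : List (Fin n),
      γ k * (L.map γ).prod
        = ((-1 : ℂ) ^ (L.countP fun j => decide (j ≠ k))) • ((L.map γ).prod * γ k) := by
  intro L
  induction L with
  | nil => simp
  | cons a L ih =>
    simp only [List.map_cons, List.prod_cons]
    by_cases h : a = k
    · subst h
      rw [List.countP_cons_of_neg (p := fun j => decide (j ≠ a)) (a := a) (l := L) (by simp)]
      calc γ a * (γ a * (L.map γ).prod)
          = γ a * (((-1 : ℂ) ^ (L.countP fun j => decide (j ≠ a))) • ((L.map γ).prod * γ a)) := by
            rw [← ih]
        _ = ((-1 : ℂ) ^ (L.countP fun j => decide (j ≠ a))) • (γ a * (L.map γ).prod * γ a) := by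
            rw [mul_smul_comm, mul_assoc]
    · rw [List.countP_cons_of_pos (p := fun j => decide (j ≠ k)) (a := a) (l := L) (by simp [h])]
      have h1 : γ k * (γ a * (L.map γ).prod) = (γ k * γ a) * (L.map γ).prod := by
        rw [mul_assoc]
      rw [h1, hanti k a (fun hh => h hh.symm)]
      calc (-(γ a * γ k)) * (L.map γ).prod
          = -(γ a * (γ k * (L.map γ).prod)) := by rw [neg_mul, mul_assoc]
        _ = -(γ a * (((-1 : ℂ) ^ (L.countP fun j => decide (j ≠ k))) • ((L.map γ).prod * γ k))) := by
            rw [ih]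
        _ = ((-1 : ℂ) ^ (L.countP (fun j => decide (j ≠ k)) + 1)) •
              (γ a * (L.map γ).prod * γ k) := by
            rw [mul_smul_comm, ← neg_smul, pow_succ, mul_assoc]
            ring_nf


/-- ordered product of gammas over a finite set of indices -/
noncomputable def gprod (S : Finset (Fin n)) : Matrix m m ℂ :=
  ((S.sort (· ≤ ·)).map γ).prod

lemma countP_sort (S : Finset (Fin n)) (k : Fin n) :
    ((S.sort (· ≤ ·)).countP fun j => decide (j ≠ k)) = (S.erase k).card := by
  rw [List.countP_eq_length_filter]
  have hnd : ((S.sort (· ≤ ·)).filter fun j => decide (j ≠ k)).Nodup :=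
    (Finset.sort_nodup (s := S) (r := (· ≤ ·))).filter _
  rw [← List.toFinset_card_of_nodup hnd, List.toFinset_filter]
  rw [Finset.sort_toFinset]
  congr 1
  ext x
  simp [and_comm]

lemma gamma_swap_gprod
    (hanti : ∀ j l : Fin n, j ≠ l → γ j * γ l = -(γ l * γ j)) (k : Fin n)
    (S : Finset (Fin n)) :
    γ k * gprod γ S = ((-1 : ℂ) ^ (S.erase k).card) • (gprod γ S * γ k) := by
  rw [gprod, gamma_swap_list γ hanti k, countP_sort]

lemma gprod_isUnit (hu : ∀ k, IsUnit (γ k)) (S : Finset (Fin n)) :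
    IsUnit (gprod γ S) := by
  apply List.prod_isUnit
  intro x hx
  rcases List.mem_map.1 hx with ⟨j, _, rfl⟩
  exact hu j

lemma gprod_empty : gprod γ (∅ : Finset (Fin n)) = 1 := by
  simp [gprod]


lemma erase_card_eq (S : Finset (Fin n)) (k : Fin n) :
    (S.erase k).card = if k ∈ S then S.card - 1 else S.card := by
  by_cases h : k ∈ S
  · simp [h, Finset.card_erase_of_mem]
  · simp [h, Finset.erase_eq_of_notMem]

lemma parity_sets_eq (hn : Even n) (S T : Finset (Fin n))
    (h : ∀ k : Fin n, (S.erase k).card % 2 = (T.erase k).card % 2) : S = T := by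
  have claim : ∀ k : Fin n, ((k ∈ S ↔ k ∈ T) ↔ S.card % 2 = T.card % 2) := by
    intro k
    have h1 := h k
    rw [erase_card_eq, erase_card_eq] at h1
    have hcS : k ∈ S → 1 ≤ S.card := fun hk => Finset.card_pos.mpr ⟨k, hk⟩
    have hcT : k ∈ T → 1 ≤ T.card := fun hk => Finset.card_pos.mpr ⟨k, hk⟩
    by_cases hkS : k ∈ S <;> by_cases hkT : k ∈ T <;>
      simp only [hkS, hkT, if_true, if_false] at h1 <;>
      simp only [hkS, hkT, true_iff, false_iff, iff_true, iff_false, not_true, not_false_iff] <;>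
      [skip; skip; skip; skip] <;>
      first
        | (have := hcS hkS; have := hcT hkT; omega)
        | (have := hcS hkS; omega)
        | (have := hcT hkT; omega)
        | omega
  by_cases hpar : S.card % 2 = T.card % 2
  · ext k
    exact (claim k).mpr hpar
  · exfalso
    have hcomp : T = Sᶜ := by
      ext k
      simp only [Finset.mem_compl]
      have h2 := claim k
      tauto
    have hle : S.card ≤ Fintype.card (Fin n) := Finset.card_le_univ S
    have hcard : S.card + T.card = n := by
      rw [hcomp, Finset.card_compl, Fintype.card_fin] at *
      omega
    obtain ⟨mh, hm⟩ := hn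
    omega

lemma signSum_key (S : Finset (Fin n)) :
    ∑ k : Fin n, ((-1:ℤ) ^ ((S.erase k).card)) * 2 ^ (k:ℕ)
      = 2 * (∑ i ∈ (Finset.univ.filter fun k : Fin n =>
            Even ((S.erase k).card)).image Fin.val, (2:ℤ)^i)
        - ∑ k : Fin n, (2:ℤ)^(k:ℕ) := by
  rw [Finset.sum_image (fun a _ b _ hab => Fin.val_injective hab)]
  have step : ∀ k : Fin n, ((-1:ℤ) ^ ((S.erase k).card)) * 2 ^ (k:ℕ)
      = 2 * (if Even ((S.erase k).card) then (2:ℤ)^(k:ℕ) else 0) - 2^(k:ℕ) := by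
    intro k
    by_cases hk : Even ((S.erase k).card)
    · rw [if_pos hk, hk.neg_one_pow]; ring
    · rw [if_neg hk, (Nat.not_even_iff_odd.mp hk).neg_one_pow]; ring
  rw [Finset.sum_congr rfl fun k _ => step k, Finset.sum_sub_distrib,
    Finset.sum_filter, ← Finset.mul_sum]

lemma signSum_inj (hn : Even n) (S T : Finset (Fin n))
    (h : ∑ k : Fin n, ((-1:ℤ) ^ ((S.erase k).card)) * 2 ^ (k:ℕ)
       = ∑ k : Fin n, ((-1:ℤ) ^ ((T.erase k).card)) * 2 ^ (k:ℕ)) : S = T := by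
  rw [signSum_key, signSum_key] at h
  set DS := (Finset.univ.filter fun k : Fin n => Even ((S.erase k).card)).image Fin.val with hDS
  set DT := (Finset.univ.filter fun k : Fin n => Even ((T.erase k).card)).image Fin.val with hDT
  have hZ : (∑ i ∈ DS, (2:ℤ)^i) = ∑ i ∈ DT, (2:ℤ)^i := by linarith
  have hNat : (∑ i ∈ DS, (2:ℕ)^i) = ∑ i ∈ DT, (2:ℕ)^i := by
    have := hZ
    push_cast at this
    exact_mod_cast this
  have hD : DS = DT := Finset.geomSum_injective (le_refl 2) hNat
  apply parity_sets_eq hn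
  intro k
  have hmem : (k : ℕ) ∈ DS ↔ (k : ℕ) ∈ DT := by rw [hD]
  have h1 : ((k:ℕ) ∈ DS) ↔ Even ((S.erase k).card) := by
    rw [hDS]; simp [Fin.val_injective.eq_iff]
  have h2 : ((k:ℕ) ∈ DT) ↔ Even ((T.erase k).card) := by
    rw [hDT]; simp [Fin.val_injective.eq_iff]
  rw [h1, h2] at hmem
  rw [Nat.even_iff, Nat.even_iff] at hmem
  omega


lemma commutant_scalar [Nonempty m] (heven : Even n)
    (hcard : Fintype.card m * Fintype.card m = 2 ^ n)
    (ε : Fin n → ℂ) (hε : ∀ k, ε k = 1 ∨ ε k = -1)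
    (hsq : ∀ k, γ k * γ k = ε k • 1)
    (hanti : ∀ j l : Fin n, j ≠ l → γ j * γ l = -(γ l * γ j))
    (A : Matrix m m ℂ) (hA : ∀ k, γ k * A = A * γ k) :
    ∃ c : ℂ, A = c • 1 := by
  classical
  have hε2 : ∀ k, ε k * ε k = 1 := by
    intro k; rcases hε k with h | h <;> rw [h] <;> norm_num
  have hunit : ∀ k, IsUnit (γ k) := by
    intro k
    refine ⟨⟨γ k, ε k • γ k, ?_, ?_⟩, rfl⟩
    · rw [mul_smul_comm, hsq, smul_smul, hε2, one_smul]
    · rw [smul_mul_assoc, hsq, smul_smul, hε2, one_smul]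
  set Φ : Module.End ℂ (Matrix m m ℂ) :=
    ∑ k : Fin n, ((2:ℂ)^(k:ℕ)) •
      ((LinearMap.mulLeft ℂ (ε k • γ k)).comp (LinearMap.mulRight ℂ (γ k))) with hΦ
  have hΦapp : ∀ B : Matrix m m ℂ,
      Φ B = ∑ k : Fin n, ((2:ℂ)^(k:ℕ)) • ((ε k • γ k) * (B * γ k)) := by
    intro B
    rw [hΦ]
    simp [LinearMap.sum_apply, LinearMap.smul_apply, LinearMap.comp_apply,
      LinearMap.mulLeft_apply, LinearMap.mulRight_apply]
  set μ : Finset (Fin n) → ℂ :=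
    fun S => ∑ k : Fin n, ((-1:ℂ)^((S.erase k).card)) * 2^(k:ℕ) with hμ
  have hμcast : ∀ S, μ S
      = ((∑ k : Fin n, ((-1:ℤ)^((S.erase k).card)) * 2^(k:ℕ) : ℤ) : ℂ) := by
    intro S; rw [hμ]; push_cast; rfl
  have hμinj : Function.Injective μ := by
    intro S T h
    rw [hμcast, hμcast] at h
    exact signSum_inj heven S T (by exact_mod_cast h)
  have hswap2 : ∀ (k : Fin n) (S : Finset (Fin n)),
      gprod γ S * γ k = ((-1:ℂ) ^ (S.erase k).card) • (γ k * gprod γ S) := by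
    intro k S
    have h1 := gamma_swap_gprod γ hanti k S
    have h2 : ((-1:ℂ) ^ (S.erase k).card) * ((-1:ℂ) ^ (S.erase k).card) = 1 := by
      rw [← pow_add]
      exact Even.neg_one_pow ⟨(S.erase k).card, rfl⟩
    rw [h1, smul_smul, h2, one_smul]
  have heig : ∀ S : Finset (Fin n), Φ (gprod γ S) = μ S • gprod γ S := by
    intro S
    rw [hΦapp, hμ, Finset.sum_smul]
    refine Finset.sum_congr rfl fun k _ => ?_
    rw [hswap2 k S, smul_mul_assoc, mul_smul_comm, ← mul_assoc, hsq, smul_mul_assoc, one_mul,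
      smul_smul, smul_smul, smul_smul]
    congr 1
    linear_combination ((2:ℂ)^(k:ℕ) * (-1:ℂ)^((S.erase k).card)) * hε2 k
  have hvec : ∀ S : Finset (Fin n), gprod γ S ≠ 0 :=
    fun S => (gprod_isUnit γ hunit S).ne_zero
  have li : LinearIndependent ℂ (fun S : Finset (Fin n) => gprod γ S) := by
    refine Module.End.eigenvectors_linearIndependent' Φ μ hμinj _ fun S => ?_
    exact Module.End.hasEigenvector_iff.mpr
      ⟨Module.End.mem_eigenspace_iff.mpr (heig S), hvec S⟩
  have hfr : Fintype.card (Finset (Fin n)) = Module.finrank ℂ (Matrix m m ℂ) := by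
    rw [Fintype.card_finset, Fintype.card_fin, Module.finrank_matrix,
      Module.finrank_self, mul_one, hcard]
  have hsp := li.span_eq_top_of_card_eq_finrank hfr
  have hmem : A ∈ Submodule.span ℂ (Set.range fun S : Finset (Fin n) => gprod γ S) := by
    rw [hsp]; trivial
  obtain ⟨c, hc⟩ := (Submodule.mem_span_range_iff_exists_fun ℂ).1 hmem
  have hΦA : Φ A = μ ∅ • A := by
    rw [hΦapp]
    have hterm : ∀ k : Fin n, (ε k • γ k) * (A * γ k) = A := by
      intro k
      rw [smul_mul_assoc, ← mul_assoc, hA, mul_assoc, hsq, mul_smul_comm, mul_one,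
        smul_smul, hε2, one_smul]
    rw [Finset.sum_congr rfl fun k _ => by rw [hterm k]]
    rw [hμ, ← Finset.sum_smul]
    congr 1
    refine Finset.sum_congr rfl fun k _ => ?_
    simp
  have hzero : ∑ S : Finset (Fin n), (c S * μ S - μ ∅ * c S) • gprod γ S = 0 := by
    have h1 : Φ A = ∑ S : Finset (Fin n), (c S * μ S) • gprod γ S := by
      rw [← hc, map_sum]
      refine Finset.sum_congr rfl fun S _ => ?_
      rw [_root_.map_smul, heig S, smul_smul, mul_comm]
    have h2 : Φ A = ∑ S : Finset (Fin n), (μ ∅ * c S) • gprod γ S := by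
      rw [hΦA, ← hc, Finset.smul_sum]
      refine Finset.sum_congr rfl fun S _ => ?_
      rw [smul_smul]
    have h3 : (∑ S : Finset (Fin n), (c S * μ S) • gprod γ S)
        - ∑ S : Finset (Fin n), (μ ∅ * c S) • gprod γ S = 0 := by
      rw [← h1, ← h2, sub_self]
    simpa only [sub_smul, Finset.sum_sub_distrib] using h3
  have hcoef := Fintype.linearIndependent_iff.1 li _ hzero
  refine ⟨c ∅, ?_⟩
  rw [← hc]
  rw [Finset.sum_eq_single ∅]
  · rw [gprod_empty]
  · intro S _ hS
    have h3 := hcoef S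
    have h4 : c S = 0 := by
      have h5 : c S * (μ S - μ ∅) = 0 := by linear_combination h3
      rcases mul_eq_zero.mp h5 with h | h
      · exact h
      · exact absurd (hμinj (show μ S = μ ∅ by linear_combination h)) hS
    rw [h4, zero_smul]
  · intro h; exact absurd (Finset.mem_univ ∅) h


lemma list_unitary : ∀ (L : List (Matrix m m ℂ)), (∀ a ∈ L, aᴴ * a = 1) →
    (L.prod)ᴴ * L.prod = 1 := by
  intro L
  induction L with
  | nil => simp
  | cons a L ih =>
    intro h
    rw [List.prod_cons, conjTranspose_mul]
    calc (L.prod)ᴴ * aᴴ * (a * L.prod)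
        = (L.prod)ᴴ * ((aᴴ * a) * L.prod) := by rw [mul_assoc, mul_assoc]
      _ = (L.prod)ᴴ * L.prod := by rw [h a List.mem_cons_self, one_mul]
      _ = 1 := ih fun b hb => h b (List.mem_cons_of_mem a hb)

lemma countP_finRange (k : Fin n) :
    ((List.finRange n).countP fun j => decide (j ≠ k)) = n - 1 := by
  rw [List.countP_eq_length_filter]
  have hnd : ((List.finRange n).filter fun j => decide (j ≠ k)).Nodup :=
    (List.nodup_finRange n).filter _
  rw [← List.toFinset_card_of_nodup hnd, List.toFinset_filter, List.toFinset_finRange]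
  have : (Finset.univ.filter fun x : Fin n => (decide (x ≠ k)) = true) = Finset.univ.erase k := by
    ext x; simp [and_comm]
  rw [this, Finset.card_erase_of_mem (Finset.mem_univ k), Finset.card_univ, Fintype.card_fin]

end Aux

theorem conjugations_related_by_chirality (s t : ℕ) (hn : 1 ≤ s + t)
    (heven : Even ((s : ℤ) - (t : ℤ)))
    (γ : Fin (s + t) → Matrix (Fin (2 ^ ((s + t) / 2))) (Fin (2 ^ ((s + t) / 2))) ℂ)
    (hγ : IsGammaFamily s t γ)
    (jp jm : (Fin (2 ^ ((s + t) / 2)) → ℂ) → (Fin (2 ^ ((s + t) / 2)) → ℂ))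
    (hpbij : Function.Bijective jp) (hmbij : Function.Bijective jm)
    (hpadd : ∀ ψ₁ ψ₂, jp (ψ₁ + ψ₂) = jp ψ₁ + jp ψ₂)
    (hpsmul : ∀ (c : ℂ) ψ, jp (c • ψ) = (starRingEnd ℂ c) • jp ψ)
    (hmadd : ∀ ψ₁ ψ₂, jm (ψ₁ + ψ₂) = jm ψ₁ + jm ψ₂)
    (hmsmul : ∀ (c : ℂ) ψ, jm (c • ψ) = (starRingEnd ℂ c) • jm ψ)
    (hpγ : ∀ (k : Fin (s + t)) ψ, jp (γ k *ᵥ ψ) = γ k *ᵥ jp ψ)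
    (hmγ : ∀ (k : Fin (s + t)) ψ, jm (γ k *ᵥ ψ) = -(γ k *ᵥ jm ψ)) :
    ∃ ζ : ℂ, ζ ≠ 0 ∧
      (∀ ψ, jm ψ = ζ • ((chirality s t γ) *ᵥ jp ψ)) ∧
      ((∀ ψ₁ ψ₂, star (jp ψ₁) ⬝ᵥ (jp ψ₂) = star ψ₂ ⬝ᵥ ψ₁) →
        (∀ ψ₁ ψ₂, star (jm ψ₁) ⬝ᵥ (jm ψ₂) = star ψ₂ ⬝ᵥ ψ₁) →
        ‖ζ‖ = 1) := by
  classical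
  have hN : 0 < 2 ^ ((s + t) / 2) := pow_pos (by norm_num) _
  haveI : Nonempty (Fin (2 ^ ((s + t) / 2))) := ⟨⟨0, hN⟩⟩
  -- basic relations
  have hrel := hγ.1
  have hherm := hγ.2
  set ε : Fin (s + t) → ℂ := fun k => if (k : ℕ) < t then (1:ℂ) else -1 with hεdef
  have hε : ∀ k, ε k = 1 ∨ ε k = -1 := by
    intro k; by_cases h : (k : ℕ) < t
    · left; simp [hεdef, h]
    · right; simp [hεdef, h]
  have heps : ∀ k, γ k * γ k = ε k • 1 := by
    intro k
    have h := hrel k k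
    rw [if_pos rfl] at h
    have h2 : (2:ℂ) • (γ k * γ k) = (if (k : ℕ) < t then (2:ℂ) else -2) • 1 := by
      rw [two_smul]; exact h
    have h3 : γ k * γ k = ((2:ℂ)⁻¹ * (if (k : ℕ) < t then (2:ℂ) else -2)) • 1 := by
      rw [mul_smul, ← h2, smul_smul]; norm_num
    rw [h3, hεdef]
    by_cases hk : (k : ℕ) < t <;> simp [hk] <;> norm_num
  have hanti : ∀ j l : Fin (s + t), j ≠ l → γ j * γ l = -(γ l * γ j) := by
    intro j l hjl
    have h := hrel j l
    rw [if_neg hjl, zero_smul] at h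
    exact eq_neg_of_add_eq_zero_left h
  have hε2 : ∀ k, ε k * ε k = 1 := by
    intro k; rcases hε k with h | h <;> rw [h] <;> norm_num
  have hunit : ∀ k, IsUnit (γ k) := by
    intro k
    refine ⟨⟨γ k, ε k • γ k, ?_, ?_⟩, rfl⟩
    · rw [mul_smul_comm, heps, smul_smul, hε2, one_smul]
    · rw [smul_mul_assoc, heps, smul_smul, hε2, one_smul]
  -- parity of n
  have hevenn : Even (s + t) := by
    have h1 : Even ((s : ℤ) + t) := by
      obtain ⟨r, hr⟩ := heven
      exact ⟨r + t, by linarith⟩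
    have h2 : Even ((s + t : ℕ) : ℤ) := by push_cast; exact h1
    exact_mod_cast h2
  have hcard : Fintype.card (Fin (2 ^ ((s + t) / 2))) * Fintype.card (Fin (2 ^ ((s + t) / 2)))
      = 2 ^ (s + t) := by
    rw [Fintype.card_fin, ← pow_add]
    congr 1
    obtain ⟨r, hr⟩ := hevenn
    omega
  -- the linear map T = jm ∘ jp⁻¹ as a matrix
  set e := Equiv.ofBijective jp hpbij with hedef
  have hesymm : ∀ x, jp (e.symm x) = x := fun x => e.apply_symm_apply x
  have hsymm_add : ∀ x y, e.symm (x + y) = e.symm x + e.symm y := by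
    intro x y
    apply hpbij.1
    rw [hpadd, hesymm, hesymm, hesymm]
  have hsymm_smul : ∀ (c : ℂ) x, e.symm (c • x) = (starRingEnd ℂ c) • e.symm x := by
    intro c x
    apply hpbij.1
    rw [hpsmul, hesymm, hesymm, Complex.conj_conj]
  have hsymm_gamma : ∀ (k : Fin (s + t)) x, e.symm (γ k *ᵥ x) = γ k *ᵥ e.symm x := by
    intro k x
    apply hpbij.1
    rw [hpγ, hesymm, hesymm]
  set Tlin : (Fin (2 ^ ((s + t) / 2)) → ℂ) →ₗ[ℂ] (Fin (2 ^ ((s + t) / 2)) → ℂ) :=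
    { toFun := fun ψ => jm (e.symm ψ)
      map_add' := by
        intro x y
        show jm (e.symm (x + y)) = jm (e.symm x) + jm (e.symm y)
        rw [hsymm_add, hmadd]
      map_smul' := by
        intro c x
        show jm (e.symm (c • x)) = (RingHom.id ℂ) c • jm (e.symm x)
        rw [hsymm_smul, hmsmul, Complex.conj_conj]
        rfl } with hTdef
  set M := LinearMap.toMatrix' Tlin with hMdef
  have hMapp : ∀ ψ, M *ᵥ ψ = jm (e.symm ψ) := by
    intro ψ
    rw [hMdef, ← Matrix.toLin'_apply, Matrix.toLin'_toMatrix']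
    rfl
  have hjm : ∀ ψ, jm ψ = M *ᵥ (jp ψ) := by
    intro ψ
    rw [hMapp, show jp ψ = e ψ from rfl, e.symm_apply_apply]
  have hManti : ∀ k, M * γ k = -(γ k * M) := by
    intro k
    have hvec : ∀ ψ, (M * γ k) *ᵥ ψ = (-(γ k * M)) *ᵥ ψ := by
      intro ψ
      rw [← Matrix.mulVec_mulVec, hMapp, hsymm_gamma, hmγ, ← hMapp,
        Matrix.mulVec_mulVec, Matrix.neg_mulVec]
    apply Matrix.toLin'.injective
    apply LinearMap.ext
    intro ψ
    simpa only [Matrix.toLin'_apply] using hvec ψ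
  -- the product of all gammas
  set P := (List.ofFn γ).prod with hPdef
  have hPg : ∀ k, γ k * P = -(P * γ k) := by
    intro k
    rw [hPdef, List.ofFn_eq_map, gamma_swap_list γ hanti k, countP_finRange]
    have hodd : Odd (s + t - 1) := by
      obtain ⟨r, hr⟩ := hevenn
      rw [Nat.odd_iff]
      omega
    rw [hodd.neg_one_pow, neg_one_smul]
  have hPunit : IsUnit P := by
    rw [hPdef]
    apply List.prod_isUnit
    intro x hx
    rcases List.mem_ofFn.1 hx with ⟨j, rfl⟩
    exact hunit j
  obtain ⟨u, hu⟩ := hPunit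
  set B := (↑u⁻¹ : Matrix (Fin (2 ^ ((s + t) / 2))) (Fin (2 ^ ((s + t) / 2))) ℂ) with hBdef
  have hPB : P * B = 1 := by rw [hBdef, ← hu]; exact u.mul_inv
  have hBP : B * P = 1 := by rw [hBdef, ← hu]; exact u.inv_mul
  have hBg : ∀ k, B * γ k = -(γ k * B) := by
    intro k
    calc B * γ k
        = B * (γ k * (P * B)) := by rw [hPB, mul_one]
      _ = B * ((γ k * P) * B) := by rw [← mul_assoc (γ k) P B]
      _ = B * (-(P * γ k) * B) := by rw [hPg k]
      _ = -(B * (P * (γ k * B))) := by rw [neg_mul, mul_neg, mul_assoc P (γ k) B]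
      _ = -((B * P) * (γ k * B)) := by rw [← mul_assoc B P (γ k * B)]
      _ = -(γ k * B) := by rw [hBP, one_mul]
  -- the commutant argument
  have hAcomm : ∀ k, γ k * (B * M) = (B * M) * γ k := by
    intro k
    have h1 : γ k * B = -(B * γ k) := by rw [hBg k, neg_neg]
    calc γ k * (B * M) = (γ k * B) * M := by rw [mul_assoc]
      _ = -(B * γ k) * M := by rw [h1]
      _ = -(B * (γ k * M)) := by rw [neg_mul, mul_assoc]
      _ = -(B * (-(M * γ k))) := by
          have : γ k * M = -(M * γ k) := by rw [hManti k, neg_neg]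
          rw [this]
      _ = B * (M * γ k) := by rw [mul_neg, neg_neg]
      _ = (B * M) * γ k := by rw [mul_assoc]
  obtain ⟨z, hz⟩ := commutant_scalar γ hevenn hcard ε hε heps hanti (B * M) hAcomm
  have hM : M = z • P := by
    calc M = (P * B) * M := by rw [hPB, one_mul]
      _ = P * (B * M) := by rw [mul_assoc]
      _ = P * (z • 1) := by rw [hz]
      _ = z • P := by rw [mul_smul_comm, mul_one]
  set c : ℂ := Complex.I ^ (Int.fdiv ((s : ℤ) - (t : ℤ) + 1) 2) with hcdef
  have hc0 : c ≠ 0 := zpow_ne_zero _ Complex.I_ne_zero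
  have hchir : chirality s t γ = c • P := by rw [chirality, hcdef, hPdef]
  set ζ : ℂ := z * c⁻¹ with hζdef
  have hMΓ : M = ζ • chirality s t γ := by
    rw [hchir, hM, smul_smul, hζdef]
    congr 1
    field_simp
  have hz0 : z ≠ 0 := by
    intro h0
    have hM0 : M = 0 := by rw [hM, h0, zero_smul]
    obtain ⟨x, hx⟩ := hmbij.2 (Pi.single (⟨0, hN⟩ : Fin (2 ^ ((s + t) / 2))) (1:ℂ))
    have h1 : jm x = M *ᵥ jp x := hjm x
    rw [hx, hM0, Matrix.zero_mulVec] at h1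
    have h2 := congrFun h1 ⟨0, hN⟩
    rw [Pi.single_eq_same] at h2
    exact one_ne_zero h2
  have hζ0 : ζ ≠ 0 := mul_ne_zero hz0 (inv_ne_zero hc0)
  have hconc1 : ∀ ψ, jm ψ = ζ • ((chirality s t γ) *ᵥ jp ψ) := by
    intro ψ
    rw [hjm ψ, hMΓ, Matrix.smul_mulVec]
  refine ⟨ζ, hζ0, hconc1, ?_⟩
  -- unitarity
  intro hP' hM'
  have hGG : (chirality s t γ)ᴴ * chirality s t γ = 1 := by
    rw [hchir, Matrix.conjTranspose_smul, Matrix.smul_mul, Matrix.mul_smul, smul_smul]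
    have hPP : Pᴴ * P = 1 := by
      rw [hPdef]
      apply list_unitary
      intro a ha
      rcases List.mem_ofFn.1 ha with ⟨k, rfl⟩
      have hh := hherm k
      by_cases hk : (k : ℕ) < t
      · rw [hh, if_pos hk, heps k, hεdef]
        simp [hk]
      · rw [hh, if_neg hk, Matrix.neg_mul, heps k, hεdef]
        simp [hk]
    rw [hPP]
    have : star c * c = 1 := by
      rw [hcdef]
      have h1 : Complex.normSq (Complex.I ^ (Int.fdiv ((s : ℤ) - (t : ℤ) + 1) 2)) = 1 := by
        rw [map_zpow₀ Complex.normSq Complex.I (Int.fdiv ((s : ℤ) - (t : ℤ) + 1) 2),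
          Complex.normSq_I]
        exact one_zpow _
      have h2 := Complex.normSq_eq_conj_mul_self
        (z := Complex.I ^ (Int.fdiv ((s : ℤ) - (t : ℤ) + 1) 2))
      rw [h1] at h2
      exact_mod_cast h2.symm
    rw [this, one_smul]
  have key : ∀ ψ : Fin (2 ^ ((s + t) / 2)) → ℂ,
      star ψ ⬝ᵥ ψ = (star ζ * ζ) * (star ψ ⬝ᵥ ψ) := by
    intro ψ
    have h1 := hM' ψ ψ
    rw [hconc1 ψ] at h1
    rw [star_smul, smul_dotProduct, dotProduct_smul] at h1
    have h2 : star ((chirality s t γ) *ᵥ jp ψ) ⬝ᵥ ((chirality s t γ) *ᵥ jp ψ)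
        = star (jp ψ) ⬝ᵥ jp ψ := by
      rw [Matrix.star_mulVec, ← Matrix.dotProduct_mulVec, Matrix.mulVec_mulVec, hGG,
        Matrix.one_mulVec]
    rw [h2, hP' ψ ψ] at h1
    rw [smul_eq_mul, smul_eq_mul] at h1
    linear_combination -h1
  set ψ0 : Fin (2 ^ ((s + t) / 2)) → ℂ := Pi.single (⟨0, hN⟩ : Fin (2 ^ ((s + t) / 2))) (1:ℂ)
    with hψ0def
  have hψ0 : star ψ0 ⬝ᵥ ψ0 = 1 := by
    have hstar : star ψ0 = ψ0 := by
      funext j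
      rw [hψ0def]
      simp [Pi.single_apply, apply_ite (star : ℂ → ℂ)]
    rw [hstar, hψ0def, single_dotProduct, Pi.single_eq_same, one_mul]
  have hkey := key ψ0
  rw [hψ0, mul_one] at hkey
  rw [Complex.star_def] at hkey
  have habs : ‖ζ‖ ^ 2 = 1 := by
    rw [Complex.sq_norm]
    have h2 := Complex.normSq_eq_conj_mul_self (z := ζ)
    rw [← hkey] at h2
    exact_mod_cast h2
  have hnn : 0 ≤ ‖ζ‖ := norm_nonneg ζ
  have hfact : (‖ζ‖ - 1) * (‖ζ‖ + 1) = 0 := by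
    linear_combination habs
  rcases mul_eq_zero.mp hfact with h | h
  · linarith
  · linarith
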